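/- Let (H, α, σ) be a unicellular map of genus g with face γ = ασ, and let a₁ <_m a₂ <_m a₃ be three half-edges belonging to three distinct cycles of σ. Write the three cycles as v_i = (a_i, h¹_i, ..., h^{m_i}_i), and let σ̄ be obtained from σ by replacing these three cycles by the single cycle (a₁, h¹₂,...,h^{m₂}₂, a₂, h¹₃,...,h^{m₃}₃, a₃, h¹₁,...,h^{m₁}₁). Then γ̄ = ασ̄ is a single 2n-cycle, so (H, α, σ̄) is a unicellular map, and its genus is g+1. -/

import Mathlib

open Equiv

/-- Number of cycles of a permutation (fixed points count as cycles). -/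
noncomputable def cycleCount {H : Type*} [Fintype H] [DecidableEq H]
    (σ : Equiv.Perm H) : ℕ :=
  σ.cycleType.card + Fintype.card {x // σ x = x}

set_option linter.unusedSectionVars false
set_option maxHeartbeats 1000000

section GluingAux

open Equiv Equiv.Perm

variable {H : Type*} [Fintype H] [DecidableEq H]

def scSetoid (f : Perm H) : Setoid H :=
  ⟨f.SameCycle, ⟨fun x => Equiv.Perm.SameCycle.refl f x, fun h => h.symm, fun h h' => h.trans h'⟩⟩

lemma pow_agree {f f' : Perm H} {a : H} (h : ∀ z, f.SameCycle a z → f' z = f z) :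
    ∀ m : ℕ, (f' ^ m) a = (f ^ m) a := by
  intro m
  induction m with
  | zero => simp
  | succ m ih =>
      rw [pow_succ', pow_succ', Perm.mul_apply, Perm.mul_apply, ih, h]
      exact ⟨(m : ℤ), by simp [zpow_natCast]⟩

lemma sameCycle_of_agree {f f' : Perm H} {a b : H} (h : ∀ z, f.SameCycle a z → f' z = f z)
    (hab : f.SameCycle a b) : f'.SameCycle a b := by
  obtain ⟨m, -, hm⟩ := hab.exists_pow_eq'
  exact ⟨(m : ℤ), by rw [zpow_natCast, pow_agree h, hm]⟩

lemma swap_mul_sameCycle_xy {f : Perm H} {x y : H} (h : ¬ f.SameCycle x y) :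
    (f * Equiv.swap x y).SameCycle x y := by
  classical
  have hfin : ∃ m, 0 < m ∧ (f ^ m) y = y :=
    ⟨orderOf f, orderOf_pos f, by simp [pow_orderOf_eq_one]⟩
  obtain ⟨hm0, hmy⟩ := Nat.find_spec hfin
  set m := Nat.find hfin with hmdef
  have hmin : ∀ k, 0 < k → k < m → (f ^ k) y ≠ y := fun k hk0 hkm hky =>
    Nat.find_min hfin hkm ⟨hk0, hky⟩
  have hnx : ∀ k : ℕ, (f ^ k) y ≠ x := fun k hk =>
    h (Equiv.Perm.SameCycle.symm (⟨(k : ℤ), by rw [zpow_natCast, hk]⟩ : f.SameCycle y x))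
  have key : ∀ k, 1 ≤ k → k ≤ m → ((f * Equiv.swap x y) ^ k) x = (f ^ k) y := by
    intro k
    induction k with
    | zero => exact fun h1 _ => absurd h1 (by norm_num)
    | succ k ih =>
        intro _ hk1
        by_cases hk0 : k = 0
        · subst hk0
          simp [Perm.mul_apply]
        · have hkk : 1 ≤ k := Nat.pos_of_ne_zero hk0
          have hzy : (f ^ k) y ≠ y := hmin k hkk (by omega)
          rw [pow_succ', Perm.mul_apply, ih hkk (by omega), pow_succ', Perm.mul_apply,
            Perm.mul_apply, swap_apply_of_ne_of_ne (hnx k) hzy]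
  exact ⟨(m : ℤ), by rw [zpow_natCast, key m hm0 le_rfl, hmy]⟩

lemma swap_mul_sameCycle_left {f : Perm H} {x y : H} (h : ¬ f.SameCycle x y) :
    ∀ a, f.SameCycle x a → (f * Equiv.swap x y).SameCycle x a := by
  intro a ha
  obtain ⟨k, -, hk⟩ := ha.exists_pow_eq'
  suffices hgen : ∀ k : ℕ, (f * Equiv.swap x y).SameCycle x ((f ^ k) x) by
    rw [← hk]; exact hgen k
  intro k
  induction k with
  | zero => exact SameCycle.refl _ _
  | succ k ih =>
      rw [pow_succ', Perm.mul_apply]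
      by_cases hzx : (f ^ k) x = x
      · rw [hzx]
        have hfx : f x = (f * Equiv.swap x y) y := by simp [Perm.mul_apply]
        rw [hfx]
        exact (swap_mul_sameCycle_xy h).apply_right
      · have hzy : (f ^ k) x ≠ y := fun e =>
          h ⟨(k : ℤ), by rw [zpow_natCast, e]⟩
        have : f ((f ^ k) x) = (f * Equiv.swap x y) ((f ^ k) x) := by
          rw [Perm.mul_apply, swap_apply_of_ne_of_ne hzx hzy]
        rw [this]
        exact ih.apply_right

lemma sameCycle_swap_mul_cases {f : Perm H} {x y : H} :
    ∀ a, (f * Equiv.swap x y).SameCycle x a → f.SameCycle x a ∨ f.SameCycle y a := by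
  intro a ha
  obtain ⟨k, -, hk⟩ := ha.exists_pow_eq'
  suffices hgen : ∀ k : ℕ, f.SameCycle x (((f * Equiv.swap x y) ^ k) x) ∨
      f.SameCycle y (((f * Equiv.swap x y) ^ k) x) by
    rw [← hk]; exact hgen k
  intro k
  induction k with
  | zero => exact Or.inl (SameCycle.refl _ _)
  | succ k ih =>
      rw [pow_succ', Perm.mul_apply]
      set z := ((f * Equiv.swap x y) ^ k) x with hz
      by_cases hzx : z = x
      · rw [hzx]
        right
        have : (f * Equiv.swap x y) x = f y := by simp [Perm.mul_apply]
        rw [this]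
        exact (SameCycle.refl _ _).apply_right
      · by_cases hzy : z = y
        · rw [hzy]
          left
          have : (f * Equiv.swap x y) y = f x := by simp [Perm.mul_apply]
          rw [this]
          exact (SameCycle.refl _ _).apply_right
        · have : (f * Equiv.swap x y) z = f z := by
            rw [Perm.mul_apply, swap_apply_of_ne_of_ne hzx hzy]
          rw [this]
          rcases ih with h' | h'
          · exact Or.inl h'.apply_right
          · exact Or.inr h'.apply_right

lemma sameCycle_mul_swap_of_sameCycle {f : Perm H} {x y : H}
    (h : ¬ f.SameCycle x y) {a b : H} (hab : f.SameCycle a b) :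
    (f * Equiv.swap x y).SameCycle a b := by
  by_cases hxa : f.SameCycle x a
  · exact ((swap_mul_sameCycle_left h a hxa).symm.trans
      (swap_mul_sameCycle_left h b (hxa.trans hab)))
  by_cases hya : f.SameCycle y a
  · have h' : ¬ f.SameCycle y x := fun e => h e.symm
    have e1 := swap_mul_sameCycle_left h' a hya
    have e2 := swap_mul_sameCycle_left h' b (hya.trans hab)
    rw [Equiv.swap_comm y x] at e1 e2
    exact e1.symm.trans e2
  · refine sameCycle_of_agree ?_ hab
    intro z hz
    have hzx : z ≠ x := fun e => hxa (e ▸ hz).symm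
    have hzy : z ≠ y := fun e => hya (e ▸ hz).symm
    rw [Perm.mul_apply, swap_apply_of_ne_of_ne hzx hzy]

lemma sameCycle_of_mul_swap {f : Perm H} {x y : H} (h : ¬ f.SameCycle x y) {a b : H}
    (hxa : ¬ (f * Equiv.swap x y).SameCycle x a)
    (hab : (f * Equiv.swap x y).SameCycle a b) : f.SameCycle a b := by
  refine sameCycle_of_agree ?_ hab
  intro z hz
  have hzx : z ≠ x := fun e => hxa (e ▸ hz).symm
  have hzy : z ≠ y := fun e => hxa ((swap_mul_sameCycle_xy h).trans (e ▸ hz).symm)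
  rw [Perm.mul_apply, swap_apply_of_ne_of_ne hzx hzy]

lemma fixed_sameCycle {f : Perm H} {a b : H} (ha : f a = a) (h : f.SameCycle a b) : a = b := by
  obtain ⟨i, hi⟩ := h
  rw [zpow_apply_eq_self_of_apply_eq_self ha] at hi
  exact hi

lemma cycleCount_eq_card_quot (f : Perm H) :
    cycleCount f = Nat.card (Quotient (scSetoid f)) := by
  classical
  let G : H → (↥f.cycleFactorsFinset ⊕ {x // f x = x}) := fun a =>
    if h : f a = a then Sum.inr ⟨a, h⟩
    else Sum.inl ⟨f.cycleOf a,
      cycleOf_mem_cycleFactorsFinset_iff.mpr (mem_support.mpr h)⟩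
  have hres : ∀ a b, f.SameCycle a b → G a = G b := by
    intro a b hab
    by_cases ha : f a = a
    · obtain rfl := fixed_sameCycle ha hab
      rfl
    · have hb : f b ≠ b := by
        intro hb
        have hba : b = a := fixed_sameCycle hb hab.symm
        exact ha (hba ▸ hb)
      simp only [G, dif_neg ha, dif_neg hb]
      exact congrArg _ (Subtype.ext hab.cycleOf_eq)
  let F : Quotient (scSetoid f) → (↥f.cycleFactorsFinset ⊕ {x // f x = x}) :=
    Quotient.lift G hres
  have hFmk : ∀ a, F (Quotient.mk _ a) = G a := fun _ => rfl
  have hinj : Function.Injective F := by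
    refine Quotient.ind₂ ?_
    intro a b hab
    refine Quotient.sound ?_
    show f.SameCycle a b
    by_cases ha : f a = a
    · by_cases hb : f b = b
      · simp only [hFmk, G, dif_pos ha, dif_pos hb, Sum.inr.injEq,
          Subtype.mk.injEq] at hab
        exact hab ▸ SameCycle.refl f a
      · simp only [hFmk, G, dif_pos ha, dif_neg hb] at hab
        exact absurd hab (by simp)
    · by_cases hb : f b = b
      · simp only [hFmk, G, dif_neg ha, dif_pos hb] at hab
        exact absurd hab (by simp)
      · simp only [hFmk, G, dif_neg ha, dif_neg hb, Sum.inl.injEq,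
          Subtype.mk.injEq] at hab
        have : b ∈ (f.cycleOf a).support := by
          rw [hab, mem_support_cycleOf_iff]
          exact ⟨SameCycle.refl f b, mem_support.mpr hb⟩
        exact (mem_support_cycleOf_iff.mp this).1
  have hsurj : Function.Surjective F := by
    rintro (⟨c, hc⟩ | ⟨a, ha⟩)
    · obtain ⟨hcyc, hsup⟩ := mem_cycleFactorsFinset_iff.mp hc
      obtain ⟨x, hx, -⟩ := hcyc
      have hxs : x ∈ c.support := mem_support.mpr hx
      have hfx : f x ≠ x := by rw [← hsup x hxs]; exact hx
      refine ⟨Quotient.mk _ x, ?_⟩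
      simp only [hFmk, G, dif_neg hfx, Sum.inl.injEq]
      exact Subtype.ext (cycle_is_cycleOf hxs hc).symm
    · exact ⟨Quotient.mk _ a, by simp only [hFmk, G, dif_pos ha]⟩
  have hcard := Nat.card_eq_of_bijective F ⟨hinj, hsurj⟩
  rw [hcard, Nat.card_sum, Nat.card_eq_fintype_card, Nat.card_eq_fintype_card,
    Fintype.card_coe]
  have hct : Multiset.card f.cycleType = f.cycleFactorsFinset.card := by
    rw [cycleType_def, Multiset.card_map]; rfl
  simp [cycleCount, hct]

lemma cycleCount_mul_swap {f : Perm H} {x y : H} (h : ¬ f.SameCycle x y) :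
    cycleCount (f * Equiv.swap x y) + 1 = cycleCount f := by
  classical
  rw [cycleCount_eq_card_quot, cycleCount_eq_card_quot]
  set f' := f * Equiv.swap x y with hf'
  set c : Quotient (scSetoid f) := Quotient.mk (scSetoid f) y with hc
  have hAx : f'.SameCycle x y := swap_mul_sameCycle_xy h
  have hxc : (Quotient.mk (scSetoid f) x) ≠ c := fun e => h (Quotient.exact e)
  have hac : ∀ a, ¬ f'.SameCycle x a → (Quotient.mk (scSetoid f) a) ≠ c := by
    intro a hxa e
    have hay : f.SameCycle a y := Quotient.exact e
    exact hxa (hAx.trans (sameCycle_mul_swap_of_sameCycle h hay).symm)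
  let G : H → {q : Quotient (scSetoid f) // q ≠ c} := fun a =>
    if hxa : f'.SameCycle x a then ⟨Quotient.mk _ x, hxc⟩ else ⟨Quotient.mk _ a, hac a hxa⟩
  have hres : ∀ a b, f'.SameCycle a b → G a = G b := by
    intro a b hab
    by_cases hxa : f'.SameCycle x a
    · have hxb : f'.SameCycle x b := hxa.trans hab
      simp only [G, dif_pos hxa, dif_pos hxb]
    · have hxb : ¬ f'.SameCycle x b := fun e => hxa (e.trans hab.symm)
      simp only [G, dif_neg hxa, dif_neg hxb]
      exact Subtype.ext (Quotient.sound (sameCycle_of_mul_swap h hxa hab))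
  let F : Quotient (scSetoid f') → {q : Quotient (scSetoid f) // q ≠ c} :=
    Quotient.lift G hres
  have hFmk : ∀ a, F (Quotient.mk _ a) = G a := fun _ => rfl
  have hinj : Function.Injective F := by
    refine Quotient.ind₂ ?_
    intro a b hab
    refine Quotient.sound (?_ : f'.SameCycle a b)
    by_cases hxa : f'.SameCycle x a <;> by_cases hxb : f'.SameCycle x b
    · exact hxa.symm.trans hxb
    · simp only [hFmk, G, dif_pos hxa, dif_neg hxb, Subtype.mk.injEq] at hab
      exact absurd (sameCycle_mul_swap_of_sameCycle h (Quotient.exact hab)) hxb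
    · simp only [hFmk, G, dif_neg hxa, dif_pos hxb, Subtype.mk.injEq] at hab
      exact absurd (sameCycle_mul_swap_of_sameCycle h (Quotient.exact hab.symm)) hxa
    · simp only [hFmk, G, dif_neg hxa, dif_neg hxb, Subtype.mk.injEq] at hab
      exact sameCycle_mul_swap_of_sameCycle h (Quotient.exact hab)
  have hsurj : Function.Surjective F := by
    rintro ⟨q, hq⟩
    obtain ⟨a, rfl⟩ := Quotient.exists_rep q
    by_cases hxa : f'.SameCycle x a
    · rcases sameCycle_swap_mul_cases a hxa with h1 | h2
      · refine ⟨Quotient.mk _ a, ?_⟩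
        simp only [hFmk, G, dif_pos hxa]
        exact Subtype.ext (Quotient.sound h1)
      · exact absurd (Quotient.sound h2.symm) hq
    · exact ⟨Quotient.mk _ a, by simp only [hFmk, G, dif_neg hxa]⟩
  have h1 : Nat.card (Quotient (scSetoid f')) =
      Nat.card {q : Quotient (scSetoid f) // q ≠ c} :=
    Nat.card_eq_of_bijective F ⟨hinj, hsurj⟩
  have h2 : Nat.card (Quotient (scSetoid f)) =
      Nat.card {q : Quotient (scSetoid f) // q = c} +
        Nat.card {q : Quotient (scSetoid f) // q ≠ c} := by
    rw [← Nat.card_sum]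
    exact (Nat.card_congr (Equiv.sumCompl (· = c))).symm
  have h3 : Nat.card {q : Quotient (scSetoid f) // q = c} = 1 := by
    haveI : Unique {q : Quotient (scSetoid f) // q = c} :=
      ⟨⟨⟨c, rfl⟩⟩, fun a => Subtype.ext a.2⟩
    exact Nat.card_unique
  omega

end GluingAux

open Equiv.Perm in
/-- the gluing operation: let `(H, α, σ)` be a unicellular map
of genus `g`, and `a₁ <ₘ a₂ <ₘ a₃` three half-edges in three distinct cycles
of `σ`.  Merging the three cycles
`(aᵢ, h¹ᵢ, …, h^{mᵢ}ᵢ)` into the single cycle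
`(a₁, h¹₂, …, h^{m₂}₂, a₂, h¹₃, …, h^{m₃}₃, a₃, h¹₁, …, h^{m₁}₁)` produces
exactly the permutation `σ̄ = σ ∘ (a₁ a₂ a₃)`, i.e.
`σ̄ = σ * (swap a₁ a₂ * swap a₂ a₃)`.  Then `γ̄ = ασ̄` is again a single
`2n`-cycle, so `(H, α, σ̄)` is a unicellular map, and its genus is `g + 1`. -/
theorem gluing_increases_genus {H : Type*} [Fintype H] [DecidableEq H]
    (n g : ℕ) (hn : 1 ≤ n) (hcard : Fintype.card H = 2 * n)
    (α σ : Equiv.Perm H)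
    (hinv : α * α = 1) (hfp : ∀ h : H, α h ≠ h)
    (hface : (α * σ).IsCycle ∧ (α * σ).support = Finset.univ)
    (hgenus : cycleCount σ + 2 * g = n + 1)
    (r : H) (ord : Fin (2 * n) ≃ H)
    (hord0 : ord ⟨0, by omega⟩ = r)
    (hordsucc : ∀ k : Fin (2 * n), (α * σ) (ord k) = ord (k + ⟨1, by omega⟩))
    (a₁ a₂ a₃ : H)
    (h12 : ord.symm a₁ < ord.symm a₂) (h23 : ord.symm a₂ < ord.symm a₃)
    (hc12 : ¬ σ.SameCycle a₁ a₂) (hc13 : ¬ σ.SameCycle a₁ a₃)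
    (hc23 : ¬ σ.SameCycle a₂ a₃)
    (σ' : Equiv.Perm H)
    (hσ' : σ' = σ * (Equiv.swap a₁ a₂ * Equiv.swap a₂ a₃)) :
    (α * σ').IsCycle ∧ (α * σ').support = Finset.univ ∧
      cycleCount σ' + 2 * (g + 1) = n + 1 := by
  classical
  subst hσ'
  obtain ⟨hγc, hγs⟩ := hface
  have hne : ∀ z : H, (α * σ) z ≠ z := fun z =>
    mem_support.mp (by rw [hγs]; exact Finset.mem_univ z)
  have hne12 : a₁ ≠ a₂ := fun e => absurd h12 (by rw [e]; exact lt_irrefl _)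
  have hne23 : a₂ ≠ a₃ := fun e => absurd h23 (by rw [e]; exact lt_irrefl _)
  have hne13 : a₁ ≠ a₃ := fun e => absurd (h12.trans h23) (by rw [e]; exact lt_irrefl _)
  set i₁ := ord.symm a₁ with hi₁
  set i₂ := ord.symm a₂ with hi₂
  set i₃ := ord.symm a₃ with hi₃
  clear_value i₁ i₂ i₃
  have hv12 : (i₁ : ℕ) < (i₂ : ℕ) := h12
  have hv23 : (i₂ : ℕ) < (i₃ : ℕ) := h23
  have hv3 : (i₃ : ℕ) < 2 * n := i₃.isLt
  have hγat : ∀ b : H, (α * σ) b = ord (ord.symm b + ⟨1, by omega⟩) := by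
    intro b
    conv_lhs => rw [← Equiv.apply_symm_apply ord b]
    rw [hordsucc]
  have haddval : ∀ (j : Fin (2 * n)) (hj : (j : ℕ) + 1 < 2 * n),
      (j + ⟨1, by omega⟩ : Fin (2 * n)) = ⟨(j : ℕ) + 1, hj⟩ := by
    intro j hj
    rw [Fin.add_def]
    apply Fin.ext
    simp only
    exact Nat.mod_eq_of_lt hj
  have hoi₁ : ord i₁ = a₁ := by rw [hi₁]; exact ord.apply_symm_apply a₁
  have hoi₂ : ord i₂ = a₂ := by rw [hi₂]; exact ord.apply_symm_apply a₂
  have hoi₃ : ord i₃ = a₃ := by rw [hi₃]; exact ord.apply_symm_apply a₃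
  have hγ1 : (α * σ) a₁ = ord ⟨(i₁ : ℕ) + 1, by omega⟩ := by
    have h0 := hordsucc i₁
    rw [hoi₁, haddval i₁ (by omega)] at h0
    exact h0
  have hγ2 : (α * σ) a₂ = ord ⟨(i₂ : ℕ) + 1, by omega⟩ := by
    have h0 := hordsucc i₂
    rw [hoi₂, haddval i₂ (by omega)] at h0
    exact h0
  have hγ3 : (α * σ) a₃ = ord (i₃ + ⟨1, by omega⟩) := by
    have h0 := hordsucc i₃
    rw [hoi₃] at h0
    exact h0
  -- interval invariant for γ₁ = (α*σ) * swap a₁ a₂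
  have hP : ∀ m : ℕ,
      (i₁ : ℕ) < ((ord.symm ((((α * σ) * Equiv.swap a₁ a₂) ^ m) a₂)) : ℕ) ∧
      ((ord.symm ((((α * σ) * Equiv.swap a₁ a₂) ^ m) a₂)) : ℕ) ≤ (i₂ : ℕ) := by
    intro m
    induction m with
    | zero =>
        simp only [pow_zero, Perm.one_apply]
        rw [← hi₂]
        exact ⟨hv12, le_rfl⟩
    | succ m ih =>
        obtain ⟨ih1, ih2⟩ := ih
        set z := (((α * σ) * Equiv.swap a₁ a₂) ^ m) a₂ with hz
        rw [pow_succ', Perm.mul_apply, ← hz]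
        have hzne1 : z ≠ a₁ := by
          intro e
          rw [e, ← hi₁] at ih1
          omega
        by_cases hz2 : z = a₂
        · have : ((α * σ) * Equiv.swap a₁ a₂) z = (α * σ) a₁ := by
            rw [hz2, Perm.mul_apply, Equiv.swap_apply_right]
          rw [this, hγ1, Equiv.symm_apply_apply]
          exact ⟨(by omega : (i₁ : ℕ) < (i₁ : ℕ) + 1), (by omega : (i₁ : ℕ) + 1 ≤ (i₂ : ℕ))⟩
        · have hzlt : ((ord.symm z) : ℕ) < (i₂ : ℕ) := by
            rcases lt_or_eq_of_le ih2 with h' | h'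
            · exact h'
            · have hzz : ord.symm z = ord.symm a₂ := by rw [← hi₂]; exact Fin.ext h'
              exact absurd (ord.symm.injective hzz) hz2
          have hstep : ((α * σ) * Equiv.swap a₁ a₂) z = (α * σ) z := by
            rw [Perm.mul_apply, swap_apply_of_ne_of_ne hzne1 hz2]
          rw [hstep, hγat z, haddval _ (by omega), Equiv.symm_apply_apply]
          exact ⟨(by omega : (i₁ : ℕ) < ((ord.symm z : ℕ)) + 1),
            (by omega : ((ord.symm z : ℕ)) + 1 ≤ (i₂ : ℕ))⟩
  have hnc12' : ¬ ((α * σ) * Equiv.swap a₁ a₂).SameCycle a₁ a₂ := by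
    intro hsc
    obtain ⟨k, -, hk⟩ := hsc.symm.exists_pow_eq'
    have hPk := hP k
    rw [hk, ← hi₁] at hPk
    omega
  have hnc23' : ¬ ((α * σ) * Equiv.swap a₁ a₂).SameCycle a₂ a₃ := by
    intro hsc
    obtain ⟨k, -, hk⟩ := hsc.exists_pow_eq'
    have hPk := hP k
    rw [hk, ← hi₃] at hPk
    omega
  -- σ-side invariant
  have hQ : ∀ m : ℕ, σ.SameCycle a₁ (((σ * Equiv.swap a₁ a₂) ^ m) a₂) ∨
      σ.SameCycle a₂ (((σ * Equiv.swap a₁ a₂) ^ m) a₂) := by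
    intro m
    induction m with
    | zero => exact Or.inr (SameCycle.refl _ _)
    | succ m ih =>
        set z := ((σ * Equiv.swap a₁ a₂) ^ m) a₂ with hz
        rw [pow_succ', Perm.mul_apply, ← hz]
        by_cases hz1 : z = a₁
        · have : (σ * Equiv.swap a₁ a₂) z = σ a₂ := by
            rw [hz1, Perm.mul_apply, Equiv.swap_apply_left]
          rw [this]
          exact Or.inr (SameCycle.refl _ _).apply_right
        · by_cases hz2 : z = a₂
          · have : (σ * Equiv.swap a₁ a₂) z = σ a₁ := by
              rw [hz2, Perm.mul_apply, Equiv.swap_apply_right]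
            rw [this]
            exact Or.inl (SameCycle.refl _ _).apply_right
          · have : (σ * Equiv.swap a₁ a₂) z = σ z := by
              rw [Perm.mul_apply, swap_apply_of_ne_of_ne hz1 hz2]
            rw [this]
            rcases ih with h' | h'
            · exact Or.inl h'.apply_right
            · exact Or.inr h'.apply_right
  have hncσ : ¬ (σ * Equiv.swap a₁ a₂).SameCycle a₂ a₃ := by
    intro hsc
    obtain ⟨k, -, hk⟩ := hsc.exists_pow_eq'
    rcases hQ k with h' | h' <;> rw [hk] at h'
    · exact hc13 h'
    · exact hc23 h'
  have hcnt1 := cycleCount_mul_swap hc12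
  have hcnt2 := cycleCount_mul_swap hncσ
  have hassoc : σ * (Equiv.swap a₁ a₂ * Equiv.swap a₂ a₃) =
      σ * Equiv.swap a₁ a₂ * Equiv.swap a₂ a₃ := (mul_assoc _ _ _).symm
  have hγcnt : cycleCount (α * σ) = 1 := by
    have h1 : Multiset.card (α * σ).cycleType = 1 := card_cycleType_eq_one.mpr hγc
    have h2 : Fintype.card {x // (α * σ) x = x} = 0 := by
      rw [Fintype.card_eq_zero_iff]
      exact ⟨fun z => hne z.1 z.2⟩
    unfold cycleCount
    rw [h1, h2]
  have hsplit : cycleCount (α * σ) + 1 = cycleCount ((α * σ) * Equiv.swap a₁ a₂) := by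
    have h0 := cycleCount_mul_swap hnc12'
    rwa [mul_assoc, Equiv.swap_mul_self, mul_one] at h0
  have hmerge := cycleCount_mul_swap hnc23'
  have hγ'cnt : cycleCount ((α * σ) * Equiv.swap a₁ a₂ * Equiv.swap a₂ a₃) = 1 := by omega
  have hform : α * (σ * (Equiv.swap a₁ a₂ * Equiv.swap a₂ a₃)) =
      (α * σ) * Equiv.swap a₁ a₂ * Equiv.swap a₂ a₃ := by
    rw [← mul_assoc, ← mul_assoc]
  have hγ'ne : ∀ z : H, ((α * σ) * Equiv.swap a₁ a₂ * Equiv.swap a₂ a₃) z ≠ z := by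
    intro z
    rw [Perm.mul_apply, Perm.mul_apply]
    by_cases hz3 : z = a₃
    · rw [hz3, Equiv.swap_apply_right, Equiv.swap_apply_right, hγ1]
      intro e
      have hv : (i₁ : ℕ) + 1 = (i₃ : ℕ) :=
        congrArg Fin.val (ord.injective (e.trans hoi₃.symm))
      omega
    · by_cases hz2 : z = a₂
      · rw [hz2, Equiv.swap_apply_left, swap_apply_of_ne_of_ne (Ne.symm hne13) (Ne.symm hne23),
          hγ3]
        intro e
        have he : i₃ + ⟨1, by omega⟩ = i₂ := ord.injective (e.trans hoi₂.symm)
        have hv0 := congrArg Fin.val he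
        rw [Fin.add_def] at hv0
        have hv : ((i₃ : ℕ) + 1) % (2 * n) = (i₂ : ℕ) := hv0
        by_cases hcase : (i₃ : ℕ) + 1 < 2 * n
        · rw [Nat.mod_eq_of_lt hcase] at hv
          omega
        · have h2n : (i₃ : ℕ) + 1 = 2 * n := by omega
          rw [h2n, Nat.mod_self] at hv
          omega
      · by_cases hz1 : z = a₁
        · rw [hz1, swap_apply_of_ne_of_ne hne12 hne13, Equiv.swap_apply_left, hγ2]
          intro e
          have hv : (i₂ : ℕ) + 1 = (i₁ : ℕ) :=
            congrArg Fin.val (ord.injective (e.trans hoi₁.symm))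
          omega
        · rw [swap_apply_of_ne_of_ne hz2 hz3, swap_apply_of_ne_of_ne hz1 hz2]
          exact hne z
  rw [hform]
  refine ⟨?_, ?_, ?_⟩
  · have h2 : Fintype.card
        {x // ((α * σ) * Equiv.swap a₁ a₂ * Equiv.swap a₂ a₃) x = x} = 0 := by
      rw [Fintype.card_eq_zero_iff]
      exact ⟨fun z => hγ'ne z.1 z.2⟩
    have h1 : Multiset.card ((α * σ) * Equiv.swap a₁ a₂ * Equiv.swap a₂ a₃).cycleType = 1 := by
      have := hγ'cnt
      unfold cycleCount at this
      omega
    exact card_cycleType_eq_one.mp h1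
  · apply Finset.eq_univ_iff_forall.mpr
    intro z
    exact mem_support.mpr (hγ'ne z)
  · rw [hassoc]
    omega
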